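/- arXiv:2011.03520 — 2 statements merged into one kernel-verified Lean document; each statement's English description precedes it below -/
import Mathlib

section
/- Let G be a finite group with norm element N, and let (N,2) ⊂ ℤG be the left ideal generated by N and 2, and (I,2) = ker(ℤG → ℤ/2). Then there is an isomorphism of ℤG-modules (N,2) ≅ (I,2)* = Hom_ℤ((I,2), ℤ) sending 2 to the inclusion (I,2) ↪ ℤG and N to the map λ ↦ (1/2)ε(λ)·N, under the identification (I,2)* ≅ Hom_{ℤG}((I,2), ℤG). -/
open TensorProduct

section SubQuot
variable {G : Type*} [Group G] {V : Type*} [AddCommGroup V] [Module ℤ V]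

/-- The restriction of a representation to an invariant submodule. -/
def subRep (ρ : Representation ℤ G V) (p : Submodule ℤ V)
    (hp : ∀ g : G, ∀ x ∈ p, ρ g x ∈ p) : Representation ℤ G p where
  toFun g := (ρ g).restrict (hp g)
  map_one' := by
    ext x
    simp [LinearMap.restrict_apply]
  map_mul' g h := by
    ext x
    simp [LinearMap.restrict_apply, map_mul]

/-- The representation induced on the quotient by an invariant submodule. -/
noncomputable def quotRep (ρ : Representation ℤ G V) (p : Submodule ℤ V)
    (hp : ∀ g : G, ∀ x ∈ p, ρ g x ∈ p) : Representation ℤ G (V ⧸ p) where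
  toFun g := Submodule.mapQ p p (ρ g) (hp g)
  map_one' := by
    apply LinearMap.ext
    intro x
    obtain ⟨v, rfl⟩ := Submodule.Quotient.mk_surjective p x
    simp [Submodule.mapQ_apply]
  map_mul' g h := by
    apply LinearMap.ext
    intro x
    obtain ⟨v, rfl⟩ := Submodule.Quotient.mk_surjective p x
    simp [Submodule.mapQ_apply, map_mul]

end SubQuot

section GroupRing
variable (G : Type*) [Group G]

/-- The left regular representation of `G` on the group ring `ℤG`. -/
noncomputable def regRep : Representation ℤ G (MonoidAlgebra ℤ G) where
  toFun g := LinearMap.mulLeft ℤ (MonoidAlgebra.of ℤ G g)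
  map_one' := by
    apply LinearMap.ext; intro x
    simp [MonoidAlgebra.of_apply, ← MonoidAlgebra.one_def]
  map_mul' g h := by
    apply LinearMap.ext; intro x
    simp only [MonoidAlgebra.of_apply, LinearMap.mulLeft_apply, Module.End.mul_apply]
    rw [← mul_assoc, MonoidAlgebra.single_mul_single, mul_one]

/-- The augmentation map `ε : ℤG → ℤ`. -/
noncomputable def aug : MonoidAlgebra ℤ G →ₐ[ℤ] ℤ := MonoidAlgebra.lift ℤ ℤ G 1

/-- The augmentation ideal `I = ker(ε : ℤG → ℤ)`. -/
noncomputable def augI : Ideal (MonoidAlgebra ℤ G) := RingHom.ker (aug G).toRingHom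

/-- The mod 2 augmentation map `ℤG → ℤ/2`. -/
noncomputable def aug2 : MonoidAlgebra ℤ G →+* ZMod 2 :=
  (Int.castRingHom (ZMod 2)).comp (aug G).toRingHom

/-- The ideal `(I, 2) = ker(ℤG → ℤ/2)` generated by the augmentation ideal and `2`. -/
noncomputable def I2 : Ideal (MonoidAlgebra ℤ G) := RingHom.ker (aug2 G)

/-- The norm element `N = ∑_{g ∈ G} g ∈ ℤG`. -/
noncomputable def Nelt [Fintype G] : MonoidAlgebra ℤ G := ∑ g : G, MonoidAlgebra.of ℤ G g

/-- The (left) ideal of `ℤG` generated by the norm element `N`; the quotient by it is `ℤG/N`. -/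
noncomputable def NIdeal [Fintype G] : Ideal (MonoidAlgebra ℤ G) := Ideal.span {Nelt G}

/-- The left ideal `(N, 2)` of `ℤG` generated by the norm element `N` and `2`. -/
noncomputable def N2 [Fintype G] : Ideal (MonoidAlgebra ℤ G) := Ideal.span {Nelt G, 2}

lemma aug_single (g : G) : aug G (MonoidAlgebra.single g 1) = 1 := by
  simp [aug, MonoidAlgebra.lift_single]

lemma of_sub_one_mem_augI (g : G) :
    MonoidAlgebra.of ℤ G g - 1 ∈ (augI G).restrictScalars ℤ := by
  simp [augI, RingHom.mem_ker, map_sub, aug_single]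

lemma of_sub_one_mem_I2 (g : G) :
    MonoidAlgebra.of ℤ G g - 1 ∈ (I2 G).restrictScalars ℤ := by
  simp [I2, aug2, RingHom.mem_ker, map_sub, aug_single]

lemma two_mem_I2 : (2 : MonoidAlgebra ℤ G) ∈ (I2 G).restrictScalars ℤ := by
  have : (aug2 G) 2 = 2 := by simp [map_ofNat]
  simp [I2, RingHom.mem_ker, this]
  decide

lemma N_mem_I2 [Fintype G] (h : Even (Fintype.card G)) :
    Nelt G ∈ (I2 G).restrictScalars ℤ := by
  have : (aug2 G) (Nelt G) = (Fintype.card G : ZMod 2) := by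
    simp [Nelt, map_sum, aug2, aug_single]
  simp only [Submodule.restrictScalars_mem, I2, RingHom.mem_ker, this]
  rw [ZMod.natCast_eq_zero_iff]
  exact h.two_dvd

lemma N_mem_N2 [Fintype G] : Nelt G ∈ (N2 G).restrictScalars ℤ :=
  Ideal.subset_span (by simp)

lemma two_mem_N2 [Fintype G] : (2 : MonoidAlgebra ℤ G) ∈ (N2 G).restrictScalars ℤ :=
  Ideal.subset_span (by simp)

lemma ideal_invariant (J : Ideal (MonoidAlgebra ℤ G)) :
    ∀ g : G, ∀ x ∈ J.restrictScalars ℤ, (regRep G) g x ∈ J.restrictScalars ℤ := by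
  intro g x hx
  exact J.mul_mem_left _ hx

/-- A (left) ideal of `ℤG`, regarded as a representation of `G`. -/
noncomputable def idealRep (J : Ideal (MonoidAlgebra ℤ G)) :
    Representation ℤ G ↥(J.restrictScalars ℤ) :=
  subRep (regRep G) (J.restrictScalars ℤ) (ideal_invariant G J)

/-- The quotient `ℤG/N` of `ℤG` by the ideal generated by the norm element, as a
representation of `G`. -/
noncomputable def quotNRep [Fintype G] :
    Representation ℤ G (MonoidAlgebra ℤ G ⧸ (NIdeal G).restrictScalars ℤ) :=
  quotRep (regRep G) ((NIdeal G).restrictScalars ℤ) (ideal_invariant G (NIdeal G))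

/-- `2` as an element of `(I,2)`. -/
noncomputable def twoI2 : ↥((I2 G).restrictScalars ℤ) := ⟨2, two_mem_I2 G⟩

/-- `g - 1` as an element of `(I,2)`. -/
noncomputable def gm1 (g : G) : ↥((I2 G).restrictScalars ℤ) :=
  ⟨MonoidAlgebra.of ℤ G g - 1, of_sub_one_mem_I2 G g⟩

/-- `g - 1` as an element of the augmentation ideal `I`. -/
noncomputable def gm1I (g : G) : ↥((augI G).restrictScalars ℤ) :=
  ⟨MonoidAlgebra.of ℤ G g - 1, of_sub_one_mem_augI G g⟩

/-- The norm element as an element of `(I,2)` (for `G` of even order). -/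
noncomputable def NeltI2 [Fintype G] (h : Even (Fintype.card G)) :
    ↥((I2 G).restrictScalars ℤ) := ⟨Nelt G, N_mem_I2 G h⟩

/-- The norm element as an element of `(N,2)`. -/
noncomputable def NeltN2 [Fintype G] : ↥((N2 G).restrictScalars ℤ) := ⟨Nelt G, N_mem_N2 G⟩

end GroupRing

section Aux
variable {G : Type*} [Group G] [Fintype G]

/-- The pairing sum `∑ g, μ(g) λ(g)`. -/
noncomputable def Ssum (μ l : MonoidAlgebra ℤ G) : ℤ := ∑ g : G, μ.coeff g * l.coeff g

lemma Ssum_add_right (μ a b : MonoidAlgebra ℤ G) :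
    Ssum μ (a + b) = Ssum μ a + Ssum μ b := by
  rw [Ssum, Ssum, Ssum, ← Finset.sum_add_distrib]
  exact Finset.sum_congr rfl fun g _ => by rw [MonoidAlgebra.coeff_add, Finsupp.add_apply]; ring

lemma Ssum_smul_right (μ : MonoidAlgebra ℤ G) (z : ℤ) (a : MonoidAlgebra ℤ G) :
    Ssum μ (z • a) = z * Ssum μ a := by
  rw [Ssum, Ssum, Finset.mul_sum]
  exact Finset.sum_congr rfl fun g _ => by rw [MonoidAlgebra.coeff_smul_apply, smul_eq_mul]; ring

lemma Ssum_add_left (a b l : MonoidAlgebra ℤ G) :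
    Ssum (a + b) l = Ssum a l + Ssum b l := by
  rw [Ssum, Ssum, Ssum, ← Finset.sum_add_distrib]
  exact Finset.sum_congr rfl fun g _ => by rw [MonoidAlgebra.coeff_add, Finsupp.add_apply]; ring

lemma Ssum_smul_left (z : ℤ) (a l : MonoidAlgebra ℤ G) :
    Ssum (z • a) l = z * Ssum a l := by
  rw [Ssum, Ssum, Finset.mul_sum]
  exact Finset.sum_congr rfl fun g _ => by rw [MonoidAlgebra.coeff_smul_apply, smul_eq_mul]; ring

lemma two_eq_single : (2 : MonoidAlgebra ℤ G) = MonoidAlgebra.single 1 2 := by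
  rw [show (2 : MonoidAlgebra ℤ G) = 1 + 1 from by norm_num, MonoidAlgebra.one_def,
    ← MonoidAlgebra.single_add]
  norm_num

lemma two_apply [DecidableEq G] (x : G) :
    (2 : MonoidAlgebra ℤ G).coeff x = if x = 1 then 2 else 0 := by
  rw [two_eq_single]
  simp [MonoidAlgebra.coeff_single, Finsupp.single_apply, eq_comm]

lemma Nelt_apply (x : G) : (Nelt G).coeff x = 1 := by
  classical
  rw [Nelt, MonoidAlgebra.coeff_sum, Finsupp.finset_sum_apply]
  simp [MonoidAlgebra.of_apply, MonoidAlgebra.coeff_single, Finsupp.single_apply, Finset.sum_ite_eq']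

lemma aug_eq (l : MonoidAlgebra ℤ G) : aug G l = ∑ g : G, l.coeff g := by
  rw [aug, MonoidAlgebra.lift_apply, Finsupp.sum_fintype]
  · exact Finset.sum_congr rfl fun g _ => by simp
  · intro; simp

lemma dvd_aug_of_mem_I2 {l : MonoidAlgebra ℤ G}
    (hl : l ∈ (I2 G).restrictScalars ℤ) : (2:ℤ) ∣ ∑ g : G, l.coeff g := by
  rw [← aug_eq]
  have h0 : ((aug G l : ℤ) : ZMod 2) = 0 := by
    have := (Submodule.restrictScalars_mem ℤ (I2 G) l).mp hl
    simpa [I2, aug2, RingHom.mem_ker] using this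
  exact_mod_cast (ZMod.intCast_zmod_eq_zero_iff_dvd _ 2).1 h0

lemma finsupp_eq_sum_single (r : MonoidAlgebra ℤ G) :
    r = ∑ a : G, MonoidAlgebra.single a (r.coeff a) := by
  classical
  ext x
  rw [MonoidAlgebra.coeff_sum, Finsupp.finset_sum_apply]
  simp [MonoidAlgebra.coeff_single, Finsupp.single_apply, Finset.sum_ite_eq']

lemma mul_apply_eq (r μ : MonoidAlgebra ℤ G) (x : G) :
    (r * μ).coeff x = ∑ a : G, r.coeff a * μ.coeff (a⁻¹ * x) := by
  conv_lhs => rw [finsupp_eq_sum_single r]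
  rw [Finset.sum_mul, MonoidAlgebra.coeff_sum, Finsupp.finset_sum_apply]
  exact Finset.sum_congr rfl fun a _ => MonoidAlgebra.coeff_single_mul_apply _ _ _ _

lemma parity_of_mem_N2 {μ : MonoidAlgebra ℤ G}
    (hμ : μ ∈ (N2 G).restrictScalars ℤ) (g : G) : (2:ℤ) ∣ μ.coeff g - μ.coeff 1 := by
  classical
  have hμ' : μ ∈ Ideal.span {Nelt G, 2} := hμ
  revert g
  refine Submodule.span_induction (p := fun x _ => ∀ g : G, (2:ℤ) ∣ x.coeff g - x.coeff 1)
    ?_ ?_ ?_ ?_ hμ'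
  · rintro x (rfl | rfl) g
    · simp [Nelt_apply]
    · rcases eq_or_ne g 1 with rfl | hg
      · simp
      · simp [two_apply, hg]
  · intro g; simp
  · intro x y _ _ hx hy g
    have h : (x + y).coeff g - (x + y).coeff 1 = (x.coeff g - x.coeff 1) + (y.coeff g - y.coeff 1) := by
      simp only [MonoidAlgebra.coeff_add, Finsupp.add_apply]; ring
    rw [h]
    exact dvd_add (hx g) (hy g)
  · intro r x _ hx g
    rw [smul_eq_mul, mul_apply_eq, mul_apply_eq, ← Finset.sum_sub_distrib]
    refine Finset.dvd_sum fun a _ => ?_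
    rw [show r.coeff a * x.coeff (a⁻¹ * g) - r.coeff a * x.coeff (a⁻¹ * 1)
      = r.coeff a * (x.coeff (a⁻¹ * g) - x.coeff (a⁻¹ * 1)) from by ring]
    refine Dvd.dvd.mul_left ?_ _
    rw [show x.coeff (a⁻¹ * g) - x.coeff (a⁻¹ * 1) = (x.coeff (a⁻¹ * g) - x.coeff 1) - (x.coeff (a⁻¹ * 1) - x.coeff 1) from by ring]
    exact dvd_sub (hx _) (hx _)

lemma dvd_Ssum {μ l : MonoidAlgebra ℤ G} (hμ : μ ∈ (N2 G).restrictScalars ℤ)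
    (hl : l ∈ (I2 G).restrictScalars ℤ) : (2:ℤ) ∣ Ssum μ l := by
  have h1 : Ssum μ l = (∑ g : G, (μ.coeff g - μ.coeff 1) * l.coeff g) + μ.coeff 1 * (∑ g : G, l.coeff g) := by
    rw [Finset.mul_sum, ← Finset.sum_add_distrib, Ssum]
    exact Finset.sum_congr rfl fun g _ => by ring
  rw [h1]
  exact dvd_add (Finset.dvd_sum fun g _ => Dvd.dvd.mul_right (parity_of_mem_N2 hμ g) _)
    ((dvd_aug_of_mem_I2 hl).mul_left _)

/-- The forward map, pointwise. -/
noncomputable def eAux (μ : ↥((N2 G).restrictScalars ℤ)) :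
    Module.Dual ℤ ↥((I2 G).restrictScalars ℤ) where
  toFun l := Ssum (μ : MonoidAlgebra ℤ G) (l : MonoidAlgebra ℤ G) / 2
  map_add' a b := by
    rw [Submodule.coe_add, Ssum_add_right, Int.add_ediv_of_dvd_left (dvd_Ssum μ.2 a.2)]
  map_smul' z a := by
    rw [Submodule.coe_smul, Ssum_smul_right, Int.mul_ediv_assoc z (dvd_Ssum μ.2 a.2)]
    rfl

noncomputable def eLin :
    ↥((N2 G).restrictScalars ℤ) →ₗ[ℤ] Module.Dual ℤ ↥((I2 G).restrictScalars ℤ) where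
  toFun := eAux
  map_add' μ ν := by
    apply LinearMap.ext
    intro l
    show Ssum _ _ / 2 = Ssum _ _ / 2 + Ssum _ _ / 2
    rw [Submodule.coe_add, Ssum_add_left, Int.add_ediv_of_dvd_left (dvd_Ssum μ.2 l.2)]
  map_smul' z μ := by
    apply LinearMap.ext
    intro l
    show Ssum _ _ / 2 = z * (Ssum _ _ / 2)
    rw [Submodule.coe_smul, Ssum_smul_left, Int.mul_ediv_assoc z (dvd_Ssum μ.2 l.2)]

/-- The inverse map, as an element of `ℤG`. -/
noncomputable def iElt (φ : Module.Dual ℤ ↥((I2 G).restrictScalars ℤ)) :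
    MonoidAlgebra ℤ G :=
  φ (twoI2 G) • Nelt G + ∑ g : G, (2 * φ (gm1 G g)) • MonoidAlgebra.single g 1

lemma iElt_mem (φ : Module.Dual ℤ ↥((I2 G).restrictScalars ℤ)) :
    iElt φ ∈ (N2 G).restrictScalars ℤ := by
  refine add_mem (Submodule.smul_mem _ _ (N_mem_N2 G)) (Submodule.sum_mem _ fun g _ => ?_)
  have h1 : (2 * φ (gm1 G g)) • MonoidAlgebra.single g (1:ℤ)
      = MonoidAlgebra.single g (φ (gm1 G g)) * 2 := by
    rw [two_eq_single, MonoidAlgebra.single_mul_single, MonoidAlgebra.smul_single']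
    simp [mul_comm]
  rw [h1]
  exact Ideal.mul_mem_left _ _ (two_mem_N2 G)

lemma iElt_apply (φ : Module.Dual ℤ ↥((I2 G).restrictScalars ℤ)) (x : G) :
    (iElt φ).coeff x = φ (twoI2 G) + 2 * φ (gm1 G x) := by
  classical
  rw [iElt, MonoidAlgebra.coeff_add, Finsupp.add_apply, MonoidAlgebra.coeff_smul_apply, Nelt_apply,
    MonoidAlgebra.coeff_sum, Finsupp.finset_sum_apply]
  rw [smul_eq_mul, mul_one]
  congr 1
  have : ∀ g : G, ((2 * φ (gm1 G g)) • MonoidAlgebra.single g (1:ℤ)).coeff x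
      = if g = x then 2 * φ (gm1 G g) else 0 := by
    intro g
    rw [MonoidAlgebra.coeff_smul_apply, MonoidAlgebra.coeff_single, Finsupp.single_apply]
    split <;> simp
  rw [Finset.sum_congr rfl fun g _ => this g, Finset.sum_ite_eq']
  simp

end Aux
section Aux2
variable {G : Type*} [Group G] [Fintype G]

lemma Ssum_two_right (μ : MonoidAlgebra ℤ G) : Ssum μ 2 = μ.coeff 1 * 2 := by
  classical
  simp [Ssum, two_apply, Finsupp.single_apply, mul_ite, Finset.sum_ite_eq']

lemma Ssum_two_left (l : MonoidAlgebra ℤ G) : Ssum 2 l = 2 * l.coeff 1 := by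
  classical
  simp [Ssum, two_apply, Finsupp.single_apply, ite_mul, Finset.sum_ite_eq']

lemma Ssum_N_left (l : MonoidAlgebra ℤ G) : Ssum (Nelt G) l = ∑ g : G, l.coeff g := by
  rw [Ssum]
  exact Finset.sum_congr rfl fun g _ => by rw [Nelt_apply, one_mul]

lemma Ssum_gm1_right (μ : MonoidAlgebra ℤ G) (x : G) :
    Ssum μ (MonoidAlgebra.of ℤ G x - 1) = μ.coeff x - μ.coeff 1 := by
  classical
  rw [Ssum]
  have h : ∀ g : G, μ.coeff g * (MonoidAlgebra.of ℤ G x - 1).coeff g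
      = μ.coeff g * (if x = g then 1 else 0) - μ.coeff g * (if (1:G) = g then 1 else 0) := by
    intro g
    rw [MonoidAlgebra.coeff_sub, Finsupp.sub_apply, MonoidAlgebra.of_apply, MonoidAlgebra.one_def,
      MonoidAlgebra.coeff_single, MonoidAlgebra.coeff_single, Finsupp.single_apply, Finsupp.single_apply]
    ring
  rw [Finset.sum_congr rfl fun g _ => h g, Finset.sum_sub_distrib]
  simp [mul_ite, Finset.sum_ite_eq]

lemma Ssum_shift (g : G) (v l : MonoidAlgebra ℤ G) :
    Ssum (MonoidAlgebra.single g 1 * v) l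
      = Ssum v (MonoidAlgebra.single g⁻¹ 1 * l) := by
  rw [Ssum, Ssum]
  refine Fintype.sum_equiv (Equiv.mulLeft g⁻¹) _ _ fun h => ?_
  rw [MonoidAlgebra.coeff_single_mul_apply, MonoidAlgebra.coeff_single_mul_apply]
  simp [mul_comm]

lemma coe_idealRep (J : Ideal (MonoidAlgebra ℤ G)) (g : G)
    (v : ↥(J.restrictScalars ℤ)) :
    ((idealRep G J g v : MonoidAlgebra ℤ G)) = MonoidAlgebra.single g 1 * (v : MonoidAlgebra ℤ G) := rfl

lemma coe_gm1 (x : G) :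
    ((gm1 G x : MonoidAlgebra ℤ G)) = MonoidAlgebra.of ℤ G x - 1 := rfl

lemma eAux_apply (μ : ↥((N2 G).restrictScalars ℤ)) (l : ↥((I2 G).restrictScalars ℤ)) :
    eAux μ l = Ssum (μ : MonoidAlgebra ℤ G) (l : MonoidAlgebra ℤ G) / 2 := rfl

lemma eAux_two (μ : ↥((N2 G).restrictScalars ℤ)) :
    eAux μ (twoI2 G) = (μ : MonoidAlgebra ℤ G).coeff 1 := by
  rw [eAux_apply]
  rw [show ((twoI2 G : MonoidAlgebra ℤ G)) = 2 from rfl, Ssum_two_right]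
  exact Int.mul_ediv_cancel _ (by norm_num)

lemma eAux_gm1 (μ : ↥((N2 G).restrictScalars ℤ)) (x : G) :
    2 * eAux μ (gm1 G x) = (μ : MonoidAlgebra ℤ G).coeff x - (μ : MonoidAlgebra ℤ G).coeff 1 := by
  rw [eAux_apply, coe_gm1, Ssum_gm1_right]
  exact Int.mul_ediv_cancel' (parity_of_mem_N2 μ.2 x)

lemma I2_decomp (l : ↥((I2 G).restrictScalars ℤ)) :
    l = ((∑ g : G, (l : MonoidAlgebra ℤ G).coeff g) / 2) • twoI2 G
        + ∑ x : G, ((l : MonoidAlgebra ℤ G).coeff x) • gm1 G x := by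
  classical
  have h2 : 2 * ((∑ g : G, (l : MonoidAlgebra ℤ G).coeff g) / 2) = ∑ g : G, (l : MonoidAlgebra ℤ G).coeff g :=
    Int.mul_ediv_cancel' (dvd_aug_of_mem_I2 l.2)
  apply Subtype.ext
  rw [Submodule.coe_add, Submodule.coe_smul, AddSubmonoidClass.coe_finset_sum]
  ext y
  rw [MonoidAlgebra.coeff_add, Finsupp.add_apply, MonoidAlgebra.coeff_smul_apply, MonoidAlgebra.coeff_sum,
    Finsupp.finset_sum_apply]
  have hsum : ∀ x : G, ((((l : MonoidAlgebra ℤ G).coeff x • gm1 G x : ↥((I2 G).restrictScalars ℤ)) : MonoidAlgebra ℤ G).coeff y)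
      = (l : MonoidAlgebra ℤ G).coeff x * ((if x = y then 1 else 0) - (if (1:G) = y then 1 else 0)) := by
    intro x
    rw [Submodule.coe_smul, MonoidAlgebra.coeff_smul_apply, coe_gm1, MonoidAlgebra.coeff_sub,
      Finsupp.sub_apply, MonoidAlgebra.of_apply, MonoidAlgebra.one_def, MonoidAlgebra.coeff_single,
      MonoidAlgebra.coeff_single, Finsupp.single_apply, Finsupp.single_apply, smul_eq_mul]
  rw [Finset.sum_congr rfl fun x _ => hsum x]
  rw [show ((twoI2 G : MonoidAlgebra ℤ G)) = 2 from rfl]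
  rcases eq_or_ne y 1 with rfl | hy
  · simp only [two_apply, if_pos rfl, mul_sub, Finset.sum_sub_distrib, mul_ite, mul_one,
      mul_zero, Finset.sum_ite_eq', Finset.mem_univ, if_true, smul_eq_mul]
    omega
  · simp only [two_apply, if_neg hy, mul_sub, Finset.sum_sub_distrib, mul_ite, mul_one,
      mul_zero, Finset.sum_ite_eq', Finset.mem_univ, if_true, smul_eq_mul]
    simp [Ne.symm hy]

end Aux2
/-- For a finite group `G`, there is an isomorphism of `ℤG`-modules
`(N,2) ≅ (I,2)* = Hom_ℤ((I,2), ℤ)` sending `2` to the inclusion `(I,2) ↪ ℤG` and `N` to the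
map `λ ↦ (1/2)ε(λ)·N`, under the identification `(I,2)* ≅ Hom_{ℤG}((I,2), ℤG)` (under which a
`ℤG`-linear map `F` corresponds to the `ℤ`-linear functional `λ ↦ (F λ)(1)`, the coefficient of
the identity).  Thus the inclusion corresponds to `λ ↦ λ(1)` and `λ ↦ (1/2)ε(λ)·N` corresponds
to `λ ↦ (1/2)ε(λ)`. -/
theorem stmt11 {G : Type*} [Group G] [Fintype G] :
    ∃ e : ↥((N2 G).restrictScalars ℤ) ≃ₗ[ℤ] Module.Dual ℤ ↥((I2 G).restrictScalars ℤ),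
      (∀ (g : G) (v : ↥((N2 G).restrictScalars ℤ)),
        e ((idealRep G (N2 G)) g v) = ((idealRep G (I2 G)).dual g) (e v)) ∧
      (∀ lam : ↥((I2 G).restrictScalars ℤ),
        e ⟨2, two_mem_N2 G⟩ lam = (lam : MonoidAlgebra ℤ G).coeff 1) ∧
      (∀ lam : ↥((I2 G).restrictScalars ℤ),
        2 * e (NeltN2 G) lam = aug G (lam : MonoidAlgebra ℤ G)) := by
  classical
  refine ⟨{ toLinearMap := eLin,
            invFun := fun φ => ⟨iElt φ, iElt_mem φ⟩,
            left_inv := ?_, right_inv := ?_ }, ?_, ?_, ?_⟩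
  · -- left inverse
    intro μ
    apply Subtype.ext
    ext x
    show (iElt (eAux μ)).coeff x = (μ : MonoidAlgebra ℤ G).coeff x
    rw [iElt_apply, eAux_two, eAux_gm1]
    ring
  · -- right inverse
    intro φ
    apply LinearMap.ext
    intro l
    show Ssum (iElt φ) (l : MonoidAlgebra ℤ G) / 2 = φ l
    set k : ℤ := (∑ g : G, (l : MonoidAlgebra ℤ G).coeff g) / 2 with hk
    have h2 : 2 * k = ∑ g : G, (l : MonoidAlgebra ℤ G).coeff g :=
      Int.mul_ediv_cancel' (dvd_aug_of_mem_I2 l.2)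
    have hS : Ssum (iElt φ) (l : MonoidAlgebra ℤ G)
        = 2 * (φ (twoI2 G) * k + ∑ x : G, (l : MonoidAlgebra ℤ G).coeff x * φ (gm1 G x)) := by
      rw [Ssum]
      have h3 : ∀ x : G, (iElt φ).coeff x * (l : MonoidAlgebra ℤ G).coeff x
          = φ (twoI2 G) * (l : MonoidAlgebra ℤ G).coeff x
            + 2 * ((l : MonoidAlgebra ℤ G).coeff x * φ (gm1 G x)) := by
        intro x
        rw [iElt_apply]
        ring
      rw [Finset.sum_congr rfl fun x _ => h3 x, Finset.sum_add_distrib,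
        ← Finset.mul_sum, ← Finset.mul_sum, ← h2]
      ring
    rw [hS, Int.mul_ediv_cancel_left _ (by norm_num)]
    conv_rhs => rw [I2_decomp l]
    rw [map_add, map_smul, map_sum, ← hk]
    simp only [smul_eq_mul, map_smul]
    ring
  · -- equivariance
    intro g v
    apply LinearMap.ext
    intro l
    rw [Representation.dual_apply, Module.Dual.transpose_apply, LinearMap.comp_apply]
    show Ssum ((idealRep G (N2 G) g v : MonoidAlgebra ℤ G)) (l : MonoidAlgebra ℤ G) / 2
      = Ssum (v : MonoidAlgebra ℤ G) ((idealRep G (I2 G) g⁻¹ l : MonoidAlgebra ℤ G)) / 2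
    rw [coe_idealRep, coe_idealRep, Ssum_shift]
  · -- value on 2
    intro lam
    show Ssum (2 : MonoidAlgebra ℤ G) (lam : MonoidAlgebra ℤ G) / 2 = _
    rw [Ssum_two_left]
    exact Int.mul_ediv_cancel_left _ (by norm_num)
  · -- value on N
    intro lam
    show 2 * (Ssum (Nelt G) (lam : MonoidAlgebra ℤ G) / 2) = _
    rw [Int.mul_ediv_cancel' (dvd_Ssum (N_mem_N2 G) lam.2), Ssum_N_left, aug_eq]
end

section
/- Let G be a finite group with norm element N, and (N,2) the left ideal of ℤG generated by N and 2. Then the sequence 0 → ℤG → (N,2) → ℤ/2 → 0 is exact, where the first map is multiplication by 2 and the second map sends N to 1 and 2 to 0. -/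
open TensorProduct

section Aux
variable (G : Type*) [Group G]

lemma Nelt_apply_one [Fintype G] : (Nelt G).coeff 1 = 1 := by
  classical
  rw [Nelt, MonoidAlgebra.coeff_sum, Finset.sum_apply', Finset.sum_eq_single (1 : G)]
  · simp [MonoidAlgebra.of_apply, MonoidAlgebra.coeff_single]
  · intro b _ hb
    simp [MonoidAlgebra.of_apply, MonoidAlgebra.coeff_single, Finsupp.single_apply, hb]
  · simp

lemma two_apply_one' : ((2 : MonoidAlgebra ℤ G)).coeff 1 = 2 := by
  classical
  have h2 : (2 : MonoidAlgebra ℤ G) = 1 + 1 := by norm_num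
  rw [MonoidAlgebra.coeff_ofNat, Finsupp.single_eq_same]

lemma mul_Nelt [Fintype G] (a : MonoidAlgebra ℤ G) :
    a * Nelt G = (aug G a) • Nelt G := by
  classical
  induction a using MonoidAlgebra.induction_linear with
  | zero => simp
  | add f g hf hg => rw [add_mul, hf, hg, map_add, add_smul]
  | single g b =>
    rw [Nelt, Finset.mul_sum]
    have h1 : ∀ h : G, MonoidAlgebra.single g b * MonoidAlgebra.of ℤ G h
        = MonoidAlgebra.single (g * h) b := by
      intro h
      rw [MonoidAlgebra.of_apply, MonoidAlgebra.single_mul_single, mul_one]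
    simp_rw [h1]
    have hre : ∑ x : G, MonoidAlgebra.single (g * x) b
        = ∑ h : G, MonoidAlgebra.single h b :=
      Fintype.sum_equiv (Equiv.mulLeft g) _ _ (fun x => rfl)
    rw [hre]
    have : aug G (MonoidAlgebra.single g b) = b := by
      simp [aug, MonoidAlgebra.lift_single]
    rw [this, Finset.smul_sum]
    congr 1
    ext h
    rw [MonoidAlgebra.of_apply, MonoidAlgebra.smul_single', mul_one]

lemma two_mul_comm (v : MonoidAlgebra ℤ G) : 2 * v = v * 2 := by
  rw [two_mul, mul_two]

lemma two_mul_mem_N2 [Fintype G] (v : MonoidAlgebra ℤ G) : 2 * v ∈ N2 G := by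
  rw [two_mul_comm]
  exact Ideal.mul_mem_left _ v (Ideal.subset_span (by simp))

lemma two_mul_apply_one (v : MonoidAlgebra ℤ G) : (2 * v).coeff 1 = 2 * v.coeff 1 := by
  rw [two_mul, MonoidAlgebra.coeff_add, Finsupp.add_apply]; ring

end Aux


/-- For a finite group `G` with norm element `N` and `(N,2)` the left ideal of
`ℤG` generated by `N` and `2`, the sequence `0 → ℤG → (N,2) → ℤ/2 → 0` is exact, where the
first map is multiplication by `2` and the second map (which sends `μ` to its coefficient at
the identity, mod `2`) sends `N` to `1` and `2` to `0`. -/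
theorem stmt12 {G : Type*} [Group G] [Fintype G] :
    -- multiplication by 2 lands in (N,2)
    (∀ v : MonoidAlgebra ℤ G, 2 * v ∈ N2 G) ∧
    -- multiplication by 2 is injective
    (Function.Injective fun v : MonoidAlgebra ℤ G => 2 * v) ∧
    -- the second map sends N to 1 and 2 to 0
    (((Nelt G).coeff 1 : ZMod 2) = 1 ∧ (((2 : MonoidAlgebra ℤ G)).coeff 1 : ZMod 2) = 0) ∧
    -- exactness at (N,2)
    (∀ μ ∈ N2 G, ((μ.coeff 1 : ZMod 2) = 0 ↔ ∃ v : MonoidAlgebra ℤ G, μ = 2 * v)) ∧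
    -- surjectivity onto ℤ/2
    (∀ c : ZMod 2, ∃ μ ∈ N2 G, (μ.coeff 1 : ZMod 2) = c) := by

  refine ⟨two_mul_mem_N2 G, ?_, ⟨by rw [Nelt_apply_one]; norm_num,
    by rw [two_apply_one']; decide⟩, ?_, ?_⟩
  · intro a b h
    simp only [two_mul] at h
    apply MonoidAlgebra.coeff_injective
    ext x
    have h2 : a.coeff x + a.coeff x = b.coeff x + b.coeff x := by
      simpa [MonoidAlgebra.coeff_add, Finsupp.add_apply] using
        congrArg (fun f : MonoidAlgebra ℤ G => f.coeff x) h
    omega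
  · intro μ hμ
    rw [N2, Ideal.span, Submodule.mem_span_pair] at hμ
    obtain ⟨u, v, huv⟩ := hμ
    simp only [smul_eq_mul] at huv
    have hμ1 : μ.coeff 1 = aug G u + 2 * v.coeff 1 := by
      rw [← huv, MonoidAlgebra.coeff_add, Finsupp.add_apply, mul_Nelt, MonoidAlgebra.coeff_smul,
        Finsupp.smul_apply, Nelt_apply_one,
        smul_eq_mul, mul_one, ← two_mul_comm, two_mul_apply_one]
    constructor
    · intro h0
      have : ((aug G u : ℤ) : ZMod 2) = 0 := by
        rw [hμ1] at h0; push_cast at h0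
        rw [show ((2:ZMod 2)) = 0 from rfl] at h0; simpa using h0
      rw [ZMod.intCast_zmod_eq_zero_iff_dvd] at this
      obtain ⟨k, hk⟩ := this
      refine ⟨(k : ℤ) • Nelt G + v, ?_⟩
      rw [← huv, mul_Nelt, hk]
      rw [mul_add, ← two_mul_comm G v]
      congr 1
      rw [mul_smul]
      norm_num [two_smul, two_mul]
    · rintro ⟨w, rfl⟩
      rw [two_mul_apply_one]
      push_cast
      rw [show ((2:ZMod 2)) = 0 from rfl]
      ring
  · intro c
    fin_cases c
    · exact ⟨2, Ideal.subset_span (by simp), by rw [two_apply_one']; rfl⟩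
    · exact ⟨Nelt G, Ideal.subset_span (by simp), by rw [Nelt_apply_one]; rfl⟩
end
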